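/- Suppose each objective f_i (i = 1, …, T) is M_f-relatively Lipschitz continuous and μ-relatively strongly convex w.r.t. h with μ > 0, and the constraint g is M_g-relatively Lipschitz continuous and μ-relatively strongly convex w.r.t. h; set M = max(M_f, M_g). If the switching mirror-descent algorithm with step sizes η_t = 1/(μ·t) and threshold ε > 0 performs exactly T productive steps and T_J non-productive steps, then Σ_{i=1}^T f_i(x_{t_i}) − Σ_{i=1}^T f_i(x*) ≤ (M²/μ)·(1 + ln(T + T_J)) − ε·T_J. -/

import Mathlib

open scoped RealInnerProductSpace
open Finset

/-- The Bregman divergence `V(y,x) = h(y) − h(x) − ⟨∇h(x), y − x⟩`. -/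
noncomputable def breg {E : Type*} [NormedAddCommGroup E] [InnerProductSpace ℝ E]
    [CompleteSpace E] (h : E → ℝ) (y x : E) : ℝ :=
  h y - h x - ⟪gradient h x, y - x⟫

/-- `f` is `M`-relatively Lipschitz continuous w.r.t. the prox-function `h` on `Q`. -/
noncomputable def RelLipschitz {E : Type*} [NormedAddCommGroup E] [InnerProductSpace ℝ E]
    [CompleteSpace E] (h : E → ℝ) (Q : Set E) (M : ℝ) (f : E → ℝ) : Prop :=
  ∀ x ∈ Q, ∀ y ∈ Q, 0 ≤ ⟪gradient f x, y - x⟫ + M * Real.sqrt (2 * breg h y x)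

/-- `f` is `μ`-relatively strongly convex w.r.t. the prox-function `h` on `Q`. -/
noncomputable def RelStrongConvex {E : Type*} [NormedAddCommGroup E] [InnerProductSpace ℝ E]
    [CompleteSpace E] (h : E → ℝ) (Q : Set E) (μ : ℝ) (f : E → ℝ) : Prop :=
  ∀ x ∈ Q, ∀ y ∈ Q, f y + ⟪gradient f y, x - y⟫ + μ * breg h x y ≤ f x

/-- One mirror-descent step from `x` with step size `η` in the direction `v`: there is
`y` with `∇h(y) = ∇h(x) − η·v`, and the next iterate `x'` is the Bregman projection of
`y` onto `Q`. -/
noncomputable def MDStepV {E : Type*} [NormedAddCommGroup E] [InnerProductSpace ℝ E]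
    [CompleteSpace E] (h : E → ℝ) (Q : Set E) (η : ℝ) (v : E) (x x' : E) : Prop :=
  ∃ y : E, gradient h y = gradient h x - η • v ∧ x' ∈ Q ∧
    IsMinOn (fun z => breg h z y) Q x'

lemma convex_first_order {E : Type*} [NormedAddCommGroup E] [InnerProductSpace ℝ E]
    [CompleteSpace E] {φ : E → ℝ} (hd : Differentiable ℝ φ)
    (hc : ConvexOn ℝ Set.univ φ) (x y : E) :
    φ x + ⟪gradient φ x, y - x⟫ ≤ φ y := by
  set ψ : ℝ → ℝ := fun t => φ (x + t • (y - x)) with hψ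
  have hline : ∀ t : ℝ, HasDerivAt (fun s : ℝ => x + s • (y - x)) (y - x) t := by
    intro t
    simpa using ((hasDerivAt_id t).smul_const (y - x)).const_add x
  have hder : ∀ t : ℝ, HasDerivAt ψ ⟪gradient φ (x + t • (y - x)), y - x⟫ t := by
    intro t
    have hg : HasGradientAt φ (gradient φ (x + t • (y - x))) (x + t • (y - x)) :=
      (hd _).hasGradientAt
    have := (hg.hasFDerivAt).comp_hasDerivAt t (hline t)
    simp only [InnerProductSpace.toDual_apply_apply] at this; exact this
  have hcψ : ConvexOn ℝ Set.univ ψ := by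
    have : ψ = φ ∘ (AffineMap.lineMap x y : ℝ →ᵃ[ℝ] E) := by
      funext t
      simp only [hψ, Function.comp_apply, AffineMap.lineMap_apply_module]
      congr 1
      module
    rw [this]
    have := hc.comp_affineMap (AffineMap.lineMap x y : ℝ →ᵃ[ℝ] E)
    simpa using this
  have := hcψ.le_slope_of_hasDerivAt (Set.mem_univ 0) (Set.mem_univ 1) zero_lt_one (hder 0)
  rw [slope_def_field] at this
  simp only [hψ, zero_smul, add_zero, one_smul] at this
  have h1 : x + (y - x) = y := by abel
  rw [h1] at this
  simp only [div_one, sub_zero] at this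
  linarith [this]

lemma breg_nonneg {E : Type*} [NormedAddCommGroup E] [InnerProductSpace ℝ E]
    [CompleteSpace E] {h : E → ℝ} (hd : Differentiable ℝ h)
    (hc : ConvexOn ℝ Set.univ h) (y x : E) : 0 ≤ breg h y x := by
  have := convex_first_order hd hc x y
  simp only [breg]; linarith

lemma breg_proj_vi {E : Type*} [NormedAddCommGroup E] [InnerProductSpace ℝ E]
    [CompleteSpace E] {Q : Set E} (hQconv : Convex ℝ Q) {h : E → ℝ}
    (hd : Differentiable ℝ h) {y x' : E} (hx' : x' ∈ Q)
    (hmin : IsMinOn (fun z => breg h z y) Q x') {u : E} (hu : u ∈ Q) :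
    0 ≤ ⟪gradient h x' - gradient h y, u - x'⟫ := by
  set c := gradient h y with hc
  have hD : HasFDerivAt (fun z => breg h z y)
      ((InnerProductSpace.toDual ℝ E (gradient h x')) - innerSL ℝ c) x' := by
    have h1 : HasFDerivAt h (InnerProductSpace.toDual ℝ E (gradient h x')) x' :=
      (hd x').hasGradientAt
    have h2 : HasFDerivAt (fun z : E => ⟪c, z - y⟫) (innerSL ℝ c) x' := by
      have := ((innerSL ℝ c).hasFDerivAt (x := x')).sub_const ⟪c, y⟫
      refine this.congr_of_eventuallyEq (Filter.Eventually.of_forall fun z => ?_)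
      simp [inner_sub_right]
    exact (h1.sub_const (h y)).sub h2
  have htang : u - x' ∈ posTangentConeAt Q x' :=
    sub_mem_posTangentConeAt_of_segment_subset (hQconv.segment_subset hx' hu)
  have hlm : IsLocalMinOn (fun z => breg h z y) Q x' := hmin.localize
  have := hlm.hasFDerivWithinAt_nonneg hD.hasFDerivWithinAt htang
  simpa [inner_sub_left, InnerProductSpace.toDual_apply_apply] using this

lemma md_key_step {E : Type*} [NormedAddCommGroup E] [InnerProductSpace ℝ E]
    [CompleteSpace E] {Q : Set E} (hQconv : Convex ℝ Q) {h : E → ℝ}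
    (hd : Differentiable ℝ h) (hc : ConvexOn ℝ Set.univ h)
    {φ : E → ℝ} {M M' μ : ℝ} (hμ : 0 < μ) (hM' : M' ≤ M)
    (hLip : RelLipschitz h Q M' φ) (hSC : RelStrongConvex h Q μ φ)
    {t : ℕ} (ht : 1 ≤ t) {xt x' u : E} (hxt : xt ∈ Q) (hu : u ∈ Q)
    (hstep : MDStepV h Q (1/(μ*t)) (gradient φ xt) xt x') :
    φ xt - φ u ≤ M^2/(2*μ*t) + μ*(t-1)*breg h u xt - μ*t*breg h u x' := by
  obtain ⟨y, hy, hx'Q, hmin⟩ := hstep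
  set v := gradient φ xt with hv
  have htpos : (0:ℝ) < t := by exact_mod_cast ht
  have hcpos : (0:ℝ) < μ * t := mul_pos hμ htpos
  set η : ℝ := 1/(μ*t) with hη
  have hηpos : 0 < η := by positivity
  -- variational inequality
  have hvi := breg_proj_vi hQconv hd hx'Q hmin hu
  rw [hy] at hvi
  -- three point identity
  have h3pt : ⟪gradient h xt - gradient h x', u - x'⟫
      = breg h u x' + breg h x' xt - breg h u xt := by
    simp only [breg, inner_sub_left, inner_sub_right]
    ring
  have hvi' : η * ⟪v, x' - u⟫ ≤ breg h u xt - breg h u x' - breg h x' xt := by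
    have e1 : ⟪gradient h x' - (gradient h xt - η • v), u - x'⟫
        = -(⟪gradient h xt - gradient h x', u - x'⟫) + η * ⟪v, u - x'⟫ := by
      simp only [inner_sub_left, inner_smul_left, RCLike.conj_to_real]
      ring
    rw [e1, h3pt] at hvi
    have e2 : ⟪v, x' - u⟫ = -⟪v, u - x'⟫ := by
      rw [← inner_neg_right]; congr 1; abel
    rw [e2]; linarith
  -- relative Lipschitz bound on the movement term
  set W := breg h x' xt with hW
  have hWnn : 0 ≤ W := breg_nonneg hd hc x' xt
  have hlip := hLip xt hxt x' hx'Q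
  have hmove : ⟪v, xt - x'⟫ ≤ M * Real.sqrt (2*W) := by
    have e2 : ⟪v, xt - x'⟫ = -⟪v, x' - xt⟫ := by
      rw [← inner_neg_right]; congr 1; abel
    have hs : 0 ≤ Real.sqrt (2*W) := Real.sqrt_nonneg _
    nlinarith [mul_le_mul_of_nonneg_right hM' hs]
  -- Young's inequality
  have hyoung : η * (M * Real.sqrt (2*W)) - W ≤ η^2*M^2/2 := by
    have hsq : Real.sqrt (2*W) ^ 2 = 2*W := Real.sq_sqrt (by linarith)
    nlinarith [sq_nonneg (η*M - Real.sqrt (2*W))]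
  -- combine
  have key : η * ⟪v, xt - u⟫ ≤ η^2*M^2/2 + breg h u xt - breg h u x' := by
    have e3 : ⟪v, xt - u⟫ = ⟪v, xt - x'⟫ + ⟪v, x' - u⟫ := by
      rw [← inner_add_right]; congr 1; abel
    rw [e3]
    have := mul_le_mul_of_nonneg_left hmove hηpos.le
    nlinarith
  -- strong convexity
  have hsc := hSC u hu xt hxt
  have e4 : ⟪v, u - xt⟫ = -⟪v, xt - u⟫ := by
    rw [← inner_neg_right]; congr 1; abel
  rw [e4] at hsc
  -- a + μ V ≤ ⟪v, xt - u⟫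
  have h5 : η * ((φ xt - φ u) + μ * breg h u xt) ≤ η^2*M^2/2 + breg h u xt - breg h u x' :=
    le_trans (mul_le_mul_of_nonneg_left (by linarith) hηpos.le) key
  have h6 := mul_le_mul_of_nonneg_left h5 hcpos.le
  have hne : μ * (t:ℝ) ≠ 0 := hcpos.ne'
  have e5 : (μ*t) * (η * ((φ xt - φ u) + μ * breg h u xt))
      = (φ xt - φ u) + μ * breg h u xt := by
    rw [← mul_assoc, hη, mul_one_div_cancel hne, one_mul]
  have e6 : (μ*t) * (η^2*M^2/2 + breg h u xt - breg h u x')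
      = M^2/(2*μ*t) + μ*t*breg h u xt - μ*t*breg h u x' := by
    rw [hη]
    field_simp [hη]
  rw [e5, e6] at h6
  have : μ*(t-1)*breg h u xt = μ*t*breg h u xt - μ*breg h u xt := by ring
  linarith

/-- The key regret inequality for the switching Mirror Descent algorithm with
`η_t = 1/(μ·t)` and threshold `ε > 0`: if the run makes exactly `T` productive steps
(the `i`-th at step index `σ i`, using objective `f i`) and `T_J` non-productive steps,
then `Σ_i f_i(x_{t_i}) − Σ_i f_i(x*) ≤ (M²/μ)·(1 + ln(T + T_J)) − ε·T_J`. -/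
theorem switching_mirror_descent_key_inequality
    {E : Type*} [NormedAddCommGroup E] [InnerProductSpace ℝ E] [FiniteDimensional ℝ E]
    (Q : Set E) (hQne : Q.Nonempty) (hQclosed : IsClosed Q) (hQconv : Convex ℝ Q)
    (h : E → ℝ) (hdiff : Differentiable ℝ h) (hconv : ConvexOn ℝ Set.univ h)
    (T TJ : ℕ) (hT : 0 < T)
    (f : Fin T → E → ℝ) (g : E → ℝ)
    (hfdiff : ∀ i, Differentiable ℝ (f i)) (hgdiff : Differentiable ℝ g)
    (hfconv : ∀ i, ConvexOn ℝ Set.univ (f i)) (hgconv : ConvexOn ℝ Set.univ g)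
    (Mf Mg μ : ℝ) (hμ : 0 < μ)
    (hfLip : ∀ i, RelLipschitz h Q Mf (f i)) (hgLip : RelLipschitz h Q Mg g)
    (hfSC : ∀ i, RelStrongConvex h Q μ (f i)) (hgSC : RelStrongConvex h Q μ g)
    (M ε : ℝ) (hM : M = max Mf Mg) (hε : 0 < ε)
    -- the iterates and the run of the switching algorithm:
    (x : ℕ → E) (hx1 : x 1 ∈ Q)
    (σ : Fin T → ℕ) (hσmono : StrictMono σ)
    (hσrange : ∀ i, σ i ∈ Finset.Icc 1 (T + TJ))
    (hproductive : ∀ t ∈ Finset.Icc 1 (T + TJ), (g (x t) ≤ ε ↔ ∃ i, σ i = t))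
    (hstepP : ∀ i : Fin T,
      MDStepV h Q (1 / (μ * σ i)) (gradient (f i) (x (σ i))) (x (σ i)) (x (σ i + 1)))
    (hstepN : ∀ t ∈ Finset.Icc 1 (T + TJ), (¬ ∃ i, σ i = t) →
      MDStepV h Q (1 / (μ * t)) (gradient g (x t)) (x t) (x (t + 1)))
    -- the constrained minimizer x*:
    (xs : E) (hxsQ : xs ∈ Q) (hxsg : g xs ≤ 0)
    (hxsmin : ∀ y ∈ Q, g y ≤ 0 → ∑ i, f i xs ≤ ∑ i, f i y) :
    ∑ i, f i (x (σ i)) - ∑ i, f i xs ≤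
      M ^ 2 / μ * (1 + Real.log (T + TJ)) - ε * TJ := by
  classical
  set N := T + TJ with hN
  have hσinj := hσmono.injective
  have hMf : Mf ≤ M := hM ▸ le_max_left _ _
  have hMg : Mg ≤ M := hM ▸ le_max_right _ _
  set A : ℕ → ℝ := fun t => if hp : ∃ i, σ i = t then f hp.choose (x t) - f hp.choose xs
    else g (x t) - g xs with hAdef
  set b : ℕ → ℝ := fun t => μ * ((t : ℝ) - 1) * breg h xs (x t) with hbdef
  -- one step of the algorithm
  have step : ∀ t, t ∈ Finset.Icc 1 N → x t ∈ Q →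
      x (t+1) ∈ Q ∧ A t ≤ M^2/(2*μ*t) + b t - b (t+1) := by
    intro t htm hxtQ
    have ht1 : 1 ≤ t := (Finset.mem_Icc.1 htm).1
    have hcast : ((t+1 : ℕ) : ℝ) - 1 = (t : ℝ) := by push_cast; ring
    by_cases hp : ∃ i, σ i = t
    · obtain ⟨i, hi⟩ := hp
      have hstep := hstepP i
      rw [hi] at hstep
      obtain ⟨y, hy, hx', hmin⟩ := hstep
      refine ⟨hx', ?_⟩
      have hp' : ∃ j, σ j = t := ⟨i, hi⟩
      have hj : hp'.choose = i := hσinj (hp'.choose_spec.trans hi.symm)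
      simp only [hAdef, hbdef, dif_pos hp', hj, hcast]
      exact md_key_step hQconv hdiff hconv hμ hMf (hfLip i) (hfSC i) ht1 hxtQ hxsQ
        ⟨y, hy, hx', hmin⟩
    · obtain ⟨y, hy, hx', hmin⟩ := hstepN t htm hp
      refine ⟨hx', ?_⟩
      simp only [hAdef, hbdef, dif_neg hp, hcast]
      exact md_key_step hQconv hdiff hconv hμ hMg hgLip hgSC ht1 hxtQ hxsQ
        ⟨y, hy, hx', hmin⟩
  -- all iterates are in Q
  have hxQ : ∀ t, 1 ≤ t → t ≤ N + 1 → x t ∈ Q := by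
    intro t
    induction t with
    | zero => intro h1 _; exact absurd h1 (by norm_num)
    | succ n ih =>
      intro h1 h2
      rcases Nat.eq_zero_or_pos n with h0 | hpos
      · subst h0; exact hx1
      · exact (step n (Finset.mem_Icc.mpr ⟨hpos, by omega⟩) (ih hpos (by omega))).1
  have hA : ∀ t ∈ Finset.Icc 1 N, A t ≤ M^2/(2*μ*t) + b t - b (t+1) := by
    intro t htm
    have := Finset.mem_Icc.1 htm
    exact (step t htm (hxQ t this.1 (by omega))).2
  -- telescoping
  have htel : ∑ t ∈ Finset.Icc 1 N, (b t - b (t+1)) = b 1 - b (N+1) := by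
    rw [← Finset.Ico_add_one_right_eq_Icc, Finset.sum_Ico_eq_sum_range]
    have := Finset.sum_range_sub' (fun i => b (1+i)) N
    simpa [Nat.add_comm] using this
  have hb1 : b 1 = 0 := by simp [hbdef]
  have hbN : 0 ≤ b (N+1) := by
    have h1 : (0:ℝ) ≤ ((N+1 : ℕ) : ℝ) - 1 := by
      push_cast; linarith [Nat.cast_nonneg (α := ℝ) N]
    have h2 := breg_nonneg hdiff hconv xs (x (N+1))
    simp only [hbdef]
    exact mul_nonneg (mul_nonneg hμ.le h1) h2
  -- harmonic bound
  have hN1 : 1 ≤ N := by omega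
  have hharm : ∑ t ∈ Finset.Icc 1 N, ((t:ℝ))⁻¹ ≤ 1 + Real.log N := by
    have h1 : ((harmonic N : ℚ) : ℝ) = ∑ t ∈ Finset.Icc 1 N, ((t:ℝ))⁻¹ := by
      rw [harmonic_eq_sum_Icc]; push_cast; rfl
    rw [← h1]; exact harmonic_le_one_add_log N
  have hlogN : 0 ≤ Real.log N := Real.log_nonneg (by exact_mod_cast hN1)
  -- total regret bound
  have hS : ∑ t ∈ Finset.Icc 1 N, A t ≤ M^2/μ * (1 + Real.log N) := by
    have e1 : ∀ t ∈ Finset.Icc 1 N, M^2/(2*μ*(t:ℝ)) = M^2/(2*μ) * ((t:ℝ))⁻¹ := by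
      intro t ht
      have htne : ((t:ℝ)) ≠ 0 := by
        have : 1 ≤ t := (Finset.mem_Icc.1 ht).1
        positivity
      field_simp
    calc ∑ t ∈ Finset.Icc 1 N, A t
        ≤ ∑ t ∈ Finset.Icc 1 N, (M^2/(2*μ*t) + (b t - b (t+1))) := by
          refine Finset.sum_le_sum fun t ht => ?_
          have := hA t ht; linarith
      _ = ∑ t ∈ Finset.Icc 1 N, M^2/(2*μ*(t:ℝ)) + (b 1 - b (N+1)) := by
          rw [Finset.sum_add_distrib, htel]
      _ ≤ ∑ t ∈ Finset.Icc 1 N, M^2/(2*μ*(t:ℝ)) := by rw [hb1]; linarith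
      _ = M^2/(2*μ) * ∑ t ∈ Finset.Icc 1 N, ((t:ℝ))⁻¹ := by
          rw [Finset.sum_congr rfl e1, Finset.mul_sum]
      _ ≤ M^2/(2*μ) * (1 + Real.log N) := by
          refine mul_le_mul_of_nonneg_left hharm (by positivity)
      _ ≤ M^2/μ * (1 + Real.log N) := by
          have : M^2/(2*μ) ≤ M^2/μ := by
            apply div_le_div_of_nonneg_left (by positivity) hμ; linarith
          nlinarith
  -- split the sum
  have himg : (Finset.univ.image σ) ⊆ Finset.Icc 1 N := by
    intro t ht
    obtain ⟨i, _, hi⟩ := Finset.mem_image.1 ht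
    exact hi ▸ hσrange i
  have hsplit := Finset.sum_sdiff (f := A) himg
  have hAimg : ∑ t ∈ Finset.univ.image σ, A t = ∑ i, (f i (x (σ i)) - f i xs) := by
    rw [Finset.sum_image (fun i _ j _ hij => hσinj hij)]
    refine Finset.sum_congr rfl fun i _ => ?_
    have hp : ∃ j, σ j = σ i := ⟨i, rfl⟩
    have hj : hp.choose = i := hσinj hp.choose_spec
    simp only [hAdef, dif_pos hp, hj]
  have hcard : (Finset.Icc 1 N \ Finset.univ.image σ).card = TJ := by
    rw [Finset.card_sdiff_of_subset himg, Finset.card_image_of_injective _ hσinj, Nat.card_Icc,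
      Finset.card_univ, Fintype.card_fin]
    omega
  have hcompsum : ε * TJ ≤ ∑ t ∈ Finset.Icc 1 N \ Finset.univ.image σ, A t := by
    have hcomp : ∀ t ∈ Finset.Icc 1 N \ Finset.univ.image σ, ε ≤ A t := by
      intro t htm
      obtain ⟨htIcc, htnot⟩ := Finset.mem_sdiff.1 htm
      have hnp : ¬ ∃ i, σ i = t := by
        rintro ⟨i, hi⟩; exact htnot (Finset.mem_image.2 ⟨i, Finset.mem_univ i, hi⟩)
      have hg : ¬ g (x t) ≤ ε := fun hle => hnp ((hproductive t htIcc).1 hle)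
      simp only [hAdef, dif_neg hnp]
      linarith [not_le.1 hg]
    have := Finset.card_nsmul_le_sum _ _ _ hcomp
    rw [hcard] at this
    simpa [nsmul_eq_mul, mul_comm] using this
  -- conclude
  have hfinal : ∑ i, (f i (x (σ i)) - f i xs) ≤ M^2/μ * (1 + Real.log N) - ε * TJ := by
    have : ∑ i, (f i (x (σ i)) - f i xs)
        = ∑ t ∈ Finset.Icc 1 N, A t - ∑ t ∈ Finset.Icc 1 N \ Finset.univ.image σ, A t := by
      rw [← hAimg, ← hsplit]; ring
    rw [this]; linarith
  rw [← Finset.sum_sub_distrib] at *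
  have hcast2 : ((N : ℕ) : ℝ) = (T : ℝ) + (TJ : ℝ) := by push_cast [hN]; ring
  rw [← hcast2]
  exact hfinal
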